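/- (Lower bound of Corollary 1) Under the setup of the distortion decomposition, the overall distortion is bounded below by the projection distortion: d_p(W, R̃) ≤ D_H, where D_H = E_h[min_{ĥ∈H} d²(h,ĥ)] and d_p(W,R̃) = 1 − Tr(W W^H R̃). -/

import Mathlib

open Matrix MeasureTheory

/-- Squared Euclidean norm of a complex vector. -/
noncomputable def nsq {n : ℕ} (x : Fin n → ℂ) : ℝ := (star x ⬝ᵥ x).re

/-- Squared chordal distance between two (nonzero) complex vectors. -/
noncomputable def chordalSq {n : ℕ} (x y : Fin n → ℂ) : ℝ :=
  1 - (‖star x ⬝ᵥ y‖) ^ 2 / (nsq x * nsq y)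

/-- Covariance of the normalized directions `h/‖h‖` under the distribution `μ`. -/
noncomputable def dirCov {N : ℕ} (μ : Measure (Fin N → ℂ)) :
    Matrix (Fin N) (Fin N) ℂ :=
  Matrix.of fun i j => ∫ h, h i * star (h j) / (nsq h : ℂ) ∂μ




lemma nsq_eq {n : ℕ} (x : Fin n → ℂ) : nsq x = ∑ i, Complex.normSq (x i) := by
  rw [nsq, dotProduct, Complex.re_sum]
  exact Finset.sum_congr rfl fun i _ => by
    simp [Complex.mul_re, Complex.normSq_apply, Pi.star_apply]

lemma nsq_nonneg {n : ℕ} (x : Fin n → ℂ) : 0 ≤ nsq x := by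
  rw [nsq_eq]; exact Finset.sum_nonneg fun i _ => Complex.normSq_nonneg _

lemma nsq_eq_zero {n : ℕ} {x : Fin n → ℂ} (h : nsq x = 0) : x = 0 := by
  rw [nsq_eq] at h
  funext i
  have := (Finset.sum_eq_zero_iff_of_nonneg (fun i _ => Complex.normSq_nonneg (x i))).mp h i (Finset.mem_univ i)
  simpa [Complex.normSq_eq_zero] using this

lemma star_dot_self {n : ℕ} (x : Fin n → ℂ) : star x ⬝ᵥ x = (nsq x : ℂ) := by
  rw [nsq_eq, dotProduct]
  push_cast
  exact Finset.sum_congr rfl fun i _ => by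
    simp [Pi.star_apply, Complex.normSq_eq_conj_mul_self]

lemma inner_eq_dot {n : ℕ} (x y : EuclideanSpace ℂ (Fin n)) :
    (inner ℂ x y : ℂ) = star (x : Fin n → ℂ) ⬝ᵥ (y : Fin n → ℂ) := by
  simp [PiLp.inner_apply, dotProduct, RCLike.inner_apply, mul_comm]

lemma norm_sq_eq_nsq {n : ℕ} (x : EuclideanSpace ℂ (Fin n)) :
    ‖x‖ ^ 2 = nsq (x : Fin n → ℂ) := by
  rw [nsq_eq, EuclideanSpace.norm_eq]
  rw [Real.sq_sqrt (Finset.sum_nonneg fun i _ => sq_nonneg _)]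
  exact Finset.sum_congr rfl fun i _ => by
    rw [Complex.sq_norm]

lemma cs {n : ℕ} (x y : Fin n → ℂ) :
    ‖star x ⬝ᵥ y‖ ^ 2 ≤ nsq x * nsq y := by
  set x' : EuclideanSpace ℂ (Fin n) := WithLp.toLp 2 x with hx'
  set y' : EuclideanSpace ℂ (Fin n) := WithLp.toLp 2 y with hy'
  have h := norm_inner_le_norm (𝕜 := ℂ) x' y'
  rw [inner_eq_dot] at h
  have h2 : ‖star x ⬝ᵥ y‖ ^ 2 ≤ (‖x'‖ * ‖y'‖) ^ 2 :=
    pow_le_pow_left₀ (norm_nonneg _) h 2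
  calc ‖star x ⬝ᵥ y‖ ^ 2 = ‖star x ⬝ᵥ y‖ ^ 2 := by
        rfl
    _ ≤ (‖x'‖ * ‖y'‖) ^ 2 := h2
    _ = ‖x'‖ ^ 2 * ‖y'‖ ^ 2 := by ring
    _ = nsq x * nsq y := by rw [norm_sq_eq_nsq, norm_sq_eq_nsq]

lemma continuous_nsq {n : ℕ} : Continuous (nsq (n := n)) := by
  simp only [funext nsq_eq]
  exact continuous_finset_sum _ fun i _ =>
    Complex.continuous_normSq.comp (continuous_apply i)

lemma continuous_dot_right {n : ℕ} (c : Fin n → ℂ) :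
    Continuous fun x : Fin n → ℂ => star x ⬝ᵥ c := by
  unfold dotProduct
  exact continuous_finset_sum _ fun i _ =>
    ((continuous_star.comp (continuous_apply i)).mul continuous_const)

lemma measurable_chordalSq {n : ℕ} (c : Fin n → ℂ) :
    Measurable fun x : Fin n → ℂ => chordalSq x c := by
  unfold chordalSq
  apply Measurable.const_sub
  apply Measurable.div
  · exact ((continuous_norm.comp (continuous_dot_right c)).measurable.pow_const 2)
  · exact (continuous_nsq.measurable.mul_const _)
section proj
variable {n : ℕ} (P : Matrix (Fin n) (Fin n) ℂ) (hP : Pᴴ = P) (hPP : P * P = P)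
include hP hPP

lemma dot_shift' (h c : Fin n → ℂ) :
    star (P.mulVec h) ⬝ᵥ c = star h ⬝ᵥ P.mulVec c := by
  rw [star_mulVec, hP, ← dotProduct_mulVec]


lemma dot_self_P (h : Fin n → ℂ) :
    star h ⬝ᵥ P.mulVec h = (nsq (P.mulVec h) : ℂ) := by
  rw [← star_dot_self, dot_shift' P hP hPP, Matrix.mulVec_mulVec, hPP]

lemma nsq_proj_le (h : Fin n → ℂ) : nsq (P.mulVec h) ≤ nsq h := by
  rcases le_or_gt (nsq (P.mulVec h)) 0 with h0 | h0
  · exact h0.trans (nsq_nonneg h)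
  · have hcs := cs h (P.mulVec h)
    rw [dot_self_P P hP hPP, Complex.norm_real, Real.norm_eq_abs,
      abs_of_nonneg (nsq_nonneg _)] at hcs
    nlinarith

lemma pointwise (h c : Fin n → ℂ) (hc1 : nsq c = 1) (hc2 : P.mulVec c = c) :
    1 - nsq (P.mulVec h) / nsq h ≤ chordalSq h c := by
  rcases eq_or_ne (nsq h) 0 with h0 | h0
  · have hz : h = 0 := nsq_eq_zero h0
    subst hz
    simp [chordalSq, h0, Matrix.mulVec_zero]
  · have hpos : 0 < nsq h := lt_of_le_of_ne (nsq_nonneg h) (Ne.symm h0)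
    rw [chordalSq, hc1, mul_one]
    have key : ‖star h ⬝ᵥ c‖ ^ 2 ≤ nsq (P.mulVec h) := by
      have : star h ⬝ᵥ c = star (P.mulVec h) ⬝ᵥ c := by
        rw [dot_shift' P hP hPP, hc2]
      rw [this]
      simpa [hc1] using cs (P.mulVec h) c
    have := (div_le_div_iff_of_pos_right hpos).mpr key
    linarith

end proj
lemma chordalSq_le_one {n : ℕ} (x y : Fin n → ℂ) : chordalSq x y ≤ 1 := by
  have := div_nonneg (sq_nonneg (‖star x ⬝ᵥ y‖))
    (mul_nonneg (nsq_nonneg x) (nsq_nonneg y))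
  unfold chordalSq; linarith

lemma chordalSq_nonneg {n : ℕ} (x y : Fin n → ℂ) : 0 ≤ chordalSq x y := by
  rcases eq_or_ne (nsq x * nsq y) 0 with h0 | h0
  · have : ‖star x ⬝ᵥ y‖ ^ 2 = 0 := by
      rcases mul_eq_zero.mp h0 with h | h
      · rw [nsq_eq_zero h]; simp
      · rw [nsq_eq_zero h]; simp
    unfold chordalSq; rw [this]; simp
  · have hpos : 0 < nsq x * nsq y :=
      lt_of_le_of_ne (mul_nonneg (nsq_nonneg x) (nsq_nonneg y)) (Ne.symm h0)
    have := (div_le_one hpos).mpr (cs x y)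
    unfold chordalSq; linarith

lemma measurable_inf'_chordal {n : ℕ} (s : Finset (Fin n → ℂ)) (hs : s.Nonempty) :
    Measurable fun x : Fin n → ℂ => s.inf' hs (fun c => chordalSq x c) := by
  induction hs using Finset.Nonempty.cons_induction with
  | singleton a => simpa using measurable_chordalSq a
  | cons a s ha hs ih =>
      have hfun : (fun x : Fin n → ℂ =>
          (Finset.cons a s ha).inf' (Finset.cons_nonempty ha) fun c => chordalSq x c)
          = fun x => min (chordalSq x a) (s.inf' hs fun c => chordalSq x c) := by
        funext x
        exact Finset.inf'_cons (H := hs) ..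
      rw [hfun]
      exact Measurable.min (measurable_chordalSq a) ih

/-- Lower bound of Corollary 1: the projection distortion lower bounds the
overall distortion. -/
theorem distortion_lower_bound {N K : ℕ}
    (μ : Measure (Fin N → ℂ)) [IsProbabilityMeasure μ]
    (W : Matrix (Fin N) (Fin K) ℂ) (hW : Wᴴ * W = 1)
    (H : Finset (Fin N → ℂ)) (hne : H.Nonempty)
    (hcode : ∀ c ∈ H, nsq c = 1 ∧ (W * Wᴴ).mulVec c = c)
    (hnz : ∀ᵐ h ∂μ, h ≠ 0 ∧ (W * Wᴴ).mulVec h ≠ 0) :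
    1 - ((W * Wᴴ * dirCov μ).trace).re
      ≤ ∫ h, H.inf' hne (fun c => chordalSq h c) ∂μ := by
  set P : Matrix (Fin N) (Fin N) ℂ := W * Wᴴ with hPdef
  have hP : Pᴴ = P := by
    rw [hPdef, conjTranspose_mul, conjTranspose_conjTranspose]
  have hPP : P * P = P := by
    rw [hPdef, Matrix.mul_assoc, ← Matrix.mul_assoc Wᴴ W Wᴴ, hW, Matrix.one_mul]
  -- the quality function
  set f : (Fin N → ℂ) → ℝ := fun h => nsq (P.mulVec h) / nsq h with hfdef
  -- measurability of h ↦ P.mulVec h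
  have hmv : Measurable fun h : Fin N → ℂ => P.mulVec h := by
    apply measurable_pi_lambda
    intro i
    simp only [Matrix.mulVec, dotProduct]
    exact Finset.measurable_sum _ fun j _ => by fun_prop
  have hfmeas : Measurable f :=
    (continuous_nsq.measurable.comp hmv).div continuous_nsq.measurable
  have hf01 : ∀ h, 0 ≤ f h ∧ f h ≤ 1 := by
    intro h
    constructor
    · exact div_nonneg (nsq_nonneg _) (nsq_nonneg _)
    · rcases eq_or_ne (nsq h) 0 with h0 | h0
      · show nsq (P.mulVec h) / nsq h ≤ 1
        rw [h0, div_zero]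
        norm_num
      · have hpos : 0 < nsq h := lt_of_le_of_ne (nsq_nonneg h) (Ne.symm h0)
        exact div_le_one_of_le₀ (nsq_proj_le P hP hPP h) (le_of_lt hpos)
  have hfint : Integrable f μ := by
    apply (integrable_const (1:ℝ)).mono' hfmeas.aestronglyMeasurable
    filter_upwards with h
    rw [Real.norm_eq_abs, abs_of_nonneg (hf01 h).1]
    exact (hf01 h).2
  -- integrability of the matrix entry functions
  have hemeas : ∀ i j : Fin N, Measurable fun h : Fin N → ℂ =>
      h j * star (h i) / (nsq h : ℂ) := by
    intro i j
    apply Measurable.div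
    · exact (measurable_pi_apply j).mul
        ((continuous_star.comp (continuous_apply i)).measurable)
    · exact (Complex.continuous_ofReal.comp continuous_nsq).measurable
  have hebound : ∀ (i j : Fin N) (h : Fin N → ℂ),
      ‖h j * star (h i) / (nsq h : ℂ)‖ ≤ 1 := by
    intro i j h
    rcases eq_or_ne (nsq h) 0 with h0 | h0
    · rw [nsq_eq_zero h0]; simp
    · have hpos : 0 < nsq h := lt_of_le_of_ne (nsq_nonneg h) (Ne.symm h0)
      rw [norm_div, norm_mul, norm_star]
      have hi : ‖h i‖ ^ 2 ≤ nsq h := by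
        rw [nsq_eq]
        calc ‖h i‖ ^ 2 = Complex.normSq (h i) := by
              rw [Complex.sq_norm]
          _ ≤ ∑ k, Complex.normSq (h k) :=
              Finset.single_le_sum (fun k _ => Complex.normSq_nonneg _)
                (Finset.mem_univ i)
      have hj : ‖h j‖ ^ 2 ≤ nsq h := by
        rw [nsq_eq]
        calc ‖h j‖ ^ 2 = Complex.normSq (h j) := by
              rw [Complex.sq_norm]
          _ ≤ ∑ k, Complex.normSq (h k) :=
              Finset.single_le_sum (fun k _ => Complex.normSq_nonneg _)
                (Finset.mem_univ j)
      have hnorm : ‖(nsq h : ℂ)‖ = nsq h := by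
        rw [Complex.norm_real, Real.norm_eq_abs, abs_of_pos hpos]
      rw [hnorm, div_le_one hpos]
      nlinarith [norm_nonneg (h i), norm_nonneg (h j)]
  have heint : ∀ i j : Fin N, Integrable
      (fun h : Fin N → ℂ => h j * star (h i) / (nsq h : ℂ)) μ := by
    intro i j
    apply (integrable_const (1:ℝ)).mono' (hemeas i j).aestronglyMeasurable
    filter_upwards with h using hebound i j h
  -- the trace identity
  have htr : (P * dirCov μ).trace = ((∫ h, f h ∂μ : ℝ) : ℂ) := by
    have step1 : (P * dirCov μ).trace
        = ∑ i, ∑ j, P i j * ∫ h, h j * star (h i) / (nsq h : ℂ) ∂μ := by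
      simp only [Matrix.trace, Matrix.diag, Matrix.mul_apply, dirCov, Matrix.of_apply]
    rw [step1]
    have step2 : ∀ i j : Fin N, P i j * (∫ h, h j * star (h i) / (nsq h : ℂ) ∂μ)
        = ∫ h, P i j * (h j * star (h i) / (nsq h : ℂ)) ∂μ := by
      intro i j
      rw [← smul_eq_mul, ← integral_smul]
      simp [smul_eq_mul]
    simp only [step2]
    have step3 : ∀ i : Fin N, (∑ j, ∫ h, P i j * (h j * star (h i) / (nsq h : ℂ)) ∂μ)
        = ∫ h, ∑ j, P i j * (h j * star (h i) / (nsq h : ℂ)) ∂μ :=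
      fun i => (integral_finset_sum _ fun j _ => (heint i j).const_mul _).symm
    simp only [step3]
    rw [← integral_finset_sum (f := fun i h => ∑ j, P i j * (h j * star (h i) / (nsq h : ℂ))) _ fun i _ =>
      integrable_finset_sum _ fun j _ => (heint i j).const_mul _]
    have step4 : ∀ h : Fin N → ℂ, (∑ i, ∑ j, P i j * (h j * star (h i) / (nsq h : ℂ)))
        = ((f h : ℝ) : ℂ) := by
      intro h
      have expand : (∑ i, ∑ j, P i j * (h j * star (h i) / (nsq h : ℂ)))
          = star h ⬝ᵥ P.mulVec h / (nsq h : ℂ) := by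
        simp only [dotProduct, Matrix.mulVec, Pi.star_apply, Finset.sum_div,
          Finset.mul_sum, Finset.sum_mul]
        exact Finset.sum_congr rfl fun i _ => Finset.sum_congr rfl fun j _ => by ring
      rw [expand, dot_self_P P hP hPP, hfdef]
      push_cast
      rfl
    simp only [step4]
    exact integral_ofReal
  -- integrability of the infimum
  have hinfint : Integrable (fun h => H.inf' hne fun c => chordalSq h c) μ := by
    apply (integrable_const (1:ℝ)).mono'
      (measurable_inf'_chordal H hne).aestronglyMeasurable
    filter_upwards with h
    rw [Real.norm_eq_abs, abs_le]
    constructor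
    · have : (0:ℝ) ≤ H.inf' hne fun c => chordalSq h c :=
        Finset.le_inf' hne _ fun c _ => chordalSq_nonneg _ _
      linarith
    · exact le_trans (Finset.inf'_le _ hne.choose_spec) (chordalSq_le_one _ _)
  rw [htr, Complex.ofReal_re]
  have h1 : ∫ h, (1 - f h) ∂μ = 1 - ∫ h, f h ∂μ := by
    rw [integral_sub (integrable_const 1) hfint]
    simp
  rw [← h1]
  exact integral_mono ((integrable_const 1).sub hfint) hinfint
    (fun h => Finset.le_inf' hne _ fun c hc =>
      pointwise P hP hPP h c (hcode c hc).1 (hcode c hc).2)
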